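/- Let A be a real n×d matrix whose rows a_1,…,a_n satisfy ‖a_i‖² ≤ R. Let D : ℝ^n → ℝ be differentiable with −D (1/β)-strongly convex (β > 0), and suppose D attains its maximum value D*. Let y ∈ ℝ^n, x, x̄ ∈ ℝ^d and g ∈ ℝ^n satisfy ∇D(y) = (1/n)A x̄ − g. Set w = (1/n)A x − g, and let I ⊆ {1,…,n} with |I| = k (1 ≤ k ≤ n) be such that Σ_{i∈I} w_i² ≥ Σ_{i∈J} w_i² for every J with |J| = k. Then Σ_{i∈I} w_i² ≥ (k/(nβ))(D* − D(y)) − (kR/n²)‖x̄ − x‖². -/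

import Mathlib

open RealInnerProductSpace

lemma nsq_aux {m : ℕ} (v : EuclideanSpace ℝ (Fin m)) : ‖v‖ ^ 2 = ∑ i, v i ^ 2 := by
  rw [← real_inner_self_eq_norm_sq]
  simp only [PiLp.inner_apply, RCLike.inner_apply, conj_trivial, sq]

set_option maxHeartbeats 1000000 in
theorem stmt_6 {n d : ℕ} (a : Fin n → EuclideanSpace ℝ (Fin d)) (R : ℝ)
    (hR : ∀ i, ‖a i‖ ^ 2 ≤ R)
    (D : EuclideanSpace ℝ (Fin n) → ℝ)
    (D' : EuclideanSpace ℝ (Fin n) → EuclideanSpace ℝ (Fin n))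
    (β : ℝ) (hβ : 0 < β)
    (hDdiff : ∀ y, HasGradientAt D (D' y) y)
    (hDsc : ∀ u v, (-D u) + ⟪-D' u, v - u⟫ + (1 / β) / 2 * ‖v - u‖ ^ 2 ≤ -D v)
    (Dstar : ℝ) (hDub : ∀ y, D y ≤ Dstar) (hDatt : ∃ y, D y = Dstar)
    (y : EuclideanSpace ℝ (Fin n)) (x xbar : EuclideanSpace ℝ (Fin d))
    (g : Fin n → ℝ)
    (hgrad : ∀ i, D' y i = (1 / n : ℝ) * ⟪a i, xbar⟫ - g i)
    (w : Fin n → ℝ) (hw : ∀ i, w i = (1 / n : ℝ) * ⟪a i, x⟫ - g i)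
    (k : ℕ) (hk1 : 1 ≤ k) (hkn : k ≤ n)
    (I : Finset (Fin n)) (hI : I.card = k)
    (hgreedy : ∀ J : Finset (Fin n), J.card = k →
      ∑ i ∈ J, w i ^ 2 ≤ ∑ i ∈ I, w i ^ 2) :
    (k / (n * β) : ℝ) * (Dstar - D y) - (k * R / n ^ 2 : ℝ) * ‖xbar - x‖ ^ 2 ≤
      ∑ i ∈ I, w i ^ 2 := by
  have hn : 0 < n := lt_of_lt_of_le hk1 hkn
  set T : ℝ := ∑ i ∈ I, w i ^ 2 with hT
  set S : ℝ := ∑ i, w i ^ 2 with hS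
  set Q : ℝ := ‖xbar - x‖ ^ 2 with hQ
  set e : Fin n → ℝ := fun i => (1 / n : ℝ) * ⟪a i, xbar - x⟫ with he
  set E : ℝ := ∑ i, e i ^ 2 with hE
  have hN : (0 : ℝ) < n := by exact_mod_cast hn
  have hK : (0 : ℝ) < k := by exact_mod_cast hk1
  have hKN : (k : ℝ) ≤ n := by exact_mod_cast hkn
  have hR0 : 0 ≤ R := le_trans (sq_nonneg _) (hR ⟨0, hn⟩)
  have hQ0 : 0 ≤ Q := sq_nonneg _
  -- Step 1: greedy set captures at least k/n of the total
  have hswap : ∀ j ∉ I, (k : ℝ) * w j ^ 2 ≤ T := by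
    intro j hj
    obtain ⟨i, hi⟩ : I.Nonempty := Finset.card_pos.mp (hI ▸ hk1)
    have hji : w j ^ 2 ≤ w i ^ 2 := by
      have hjer : j ∉ I.erase i := fun h => hj (Finset.mem_of_mem_erase h)
      have hcard : (insert j (I.erase i)).card = k := by
        rw [Finset.card_insert_of_notMem hjer, Finset.card_erase_of_mem hi, hI]
        omega
      have := hgreedy _ hcard
      rw [Finset.sum_insert hjer] at this
      have herase : ∑ t ∈ I.erase i, w t ^ 2 = T - w i ^ 2 := by
        rw [hT, ← Finset.add_sum_erase I _ hi]; ring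
      rw [herase] at this; linarith
    have hmin : ∀ i' ∈ I, w j ^ 2 ≤ w i' ^ 2 := by
      intro i' hi'
      have hjer : j ∉ I.erase i' := fun h => hj (Finset.mem_of_mem_erase h)
      have hcard : (insert j (I.erase i')).card = k := by
        rw [Finset.card_insert_of_notMem hjer, Finset.card_erase_of_mem hi', hI]
        omega
      have := hgreedy _ hcard
      rw [Finset.sum_insert hjer] at this
      have herase : ∑ t ∈ I.erase i', w t ^ 2 = T - w i' ^ 2 := by
        rw [hT, ← Finset.add_sum_erase I _ hi']; ring
      rw [herase] at this; linarith
    calc (k : ℝ) * w j ^ 2 = ∑ _i ∈ I, w j ^ 2 := by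
          rw [Finset.sum_const, hI, nsmul_eq_mul]
      _ ≤ T := Finset.sum_le_sum hmin
  have hfrac : (k : ℝ) * S ≤ (n : ℝ) * T := by
    have hsplit : S = T + ∑ j ∈ Iᶜ, w j ^ 2 := by
      rw [hS, hT, ← Finset.sum_add_sum_compl I]
    have hcompl : ∑ j ∈ Iᶜ, ((k : ℝ) * w j ^ 2) ≤ ∑ _j ∈ Iᶜ, T :=
      Finset.sum_le_sum (fun j hj => hswap j (Finset.mem_compl.mp hj))
    rw [← Finset.mul_sum, Finset.sum_const, nsmul_eq_mul, Finset.card_compl,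
      Fintype.card_fin, hI] at hcompl
    have hcast : ((n - k : ℕ) : ℝ) = (n : ℝ) - k := by
      push_cast [hkn]; ring
    rw [hcast] at hcompl
    nlinarith [Finset.sum_nonneg (fun j (_ : j ∈ Iᶜ) => sq_nonneg (w j))]
  -- Step 2: PL inequality  Dstar - D y ≤ (β/2) ‖D' y‖²
  have hG : ‖D' y‖ ^ 2 = ∑ i, (D' y i) ^ 2 := nsq_aux _
  have hPL : Dstar - D y ≤ β / 2 * ‖D' y‖ ^ 2 := by
    obtain ⟨v, hv⟩ := hDatt
    have h := hDsc y v
    rw [hv] at h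
    rw [inner_neg_left] at h
    have hcs : ⟪D' y, v - y⟫ ≤ ‖D' y‖ * ‖v - y‖ := real_inner_le_norm _ _
    have h2 : Dstar - D y ≤ ⟪D' y, v - y⟫ - ‖v - y‖ ^ 2 / (2 * β) := by
      have e1 : (1 / β) / 2 * ‖v - y‖ ^ 2 = ‖v - y‖ ^ 2 / (2 * β) := by
        ring
      linarith [h, e1.symm.le, e1.le]
    have h4 : 2 * β * (Dstar - D y) ≤ 2 * β * ⟪D' y, v - y⟫ - ‖v - y‖ ^ 2 := by
      have h3 := mul_le_mul_of_nonneg_left h2 (by positivity : (0:ℝ) ≤ 2 * β)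
      have e2 : 2 * β * (⟪D' y, v - y⟫ - ‖v - y‖ ^ 2 / (2 * β)) =
          2 * β * ⟪D' y, v - y⟫ - ‖v - y‖ ^ 2 := by
        field_simp
      linarith [e2 ▸ h3]
    have h5 : 2 * β * ⟪D' y, v - y⟫ ≤ 2 * β * (‖D' y‖ * ‖v - y‖) :=
      mul_le_mul_of_nonneg_left hcs (by positivity)
    nlinarith [sq_nonneg (β * ‖D' y‖ - ‖v - y‖), hβ, mul_pos hβ hβ]
  -- Step 3: D' y i = w i + e i, so ‖D' y‖² ≤ 2S + 2E
  have hdec : ∀ i, D' y i = w i + e i := by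
    intro i
    have hin : ⟪a i, xbar - x⟫ = ⟪a i, xbar⟫ - ⟪a i, x⟫ := inner_sub_right _ _ _
    simp only [he, hgrad, hw, hin]
    ring
  have hGbound : ‖D' y‖ ^ 2 ≤ 2 * S + 2 * E := by
    rw [hG]
    calc ∑ i, (D' y i) ^ 2 ≤ ∑ i, (2 * w i ^ 2 + 2 * e i ^ 2) := by
          apply Finset.sum_le_sum
          intro i _
          rw [hdec i]
          nlinarith [sq_nonneg (w i - e i)]
      _ = 2 * S + 2 * E := by rw [hS, hE, Finset.sum_add_distrib, ← Finset.mul_sum, ← Finset.mul_sum]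
  -- Step 4: E ≤ R * Q / n
  have hEbound : E ≤ R * Q / n := by
    have hpt : ∀ i : Fin n, e i ^ 2 ≤ R * Q / n ^ 2 := by
      intro i
      have hcs : |⟪a i, xbar - x⟫| ≤ ‖a i‖ * ‖xbar - x‖ := abs_real_inner_le_norm _ _
      have h2 : ⟪a i, xbar - x⟫ ^ 2 ≤ ‖a i‖ ^ 2 * ‖xbar - x‖ ^ 2 := by
        have h2' := pow_le_pow_left₀ (abs_nonneg _) hcs 2
        rw [sq_abs] at h2'
        calc ⟪a i, xbar - x⟫ ^ 2 ≤ (‖a i‖ * ‖xbar - x‖) ^ 2 := h2'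
          _ = ‖a i‖ ^ 2 * ‖xbar - x‖ ^ 2 := by ring
      have h3 : ‖a i‖ ^ 2 * ‖xbar - x‖ ^ 2 ≤ R * Q :=
        mul_le_mul_of_nonneg_right (hR i) hQ0
      have heq2 : e i ^ 2 = ⟪a i, xbar - x⟫ ^ 2 / (n : ℝ) ^ 2 := by
        simp only [he]; ring
      rw [heq2]
      have hnum : ⟪a i, xbar - x⟫ ^ 2 ≤ R * Q := le_trans h2 h3
      gcongr
    calc E ≤ ∑ _i : Fin n, (R * Q / n ^ 2) := Finset.sum_le_sum (fun i _ => hpt i)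
      _ = n * (R * Q / n ^ 2) := by rw [Finset.sum_const, Finset.card_univ, Fintype.card_fin, nsmul_eq_mul]
      _ = R * Q / n := by field_simp
  -- Combine
  have hSlow : (Dstar - D y) / β - R * Q / n ≤ S := by
    have h1 : (Dstar - D y) / β ≤ S + E := by
      rw [div_le_iff₀ hβ]
      nlinarith [hPL, hGbound, mul_le_mul_of_nonneg_left hGbound (le_of_lt hβ)]
    linarith
  have hTlow : (k : ℝ) / n * S ≤ T := by
    rw [div_mul_eq_mul_div, div_le_iff₀ hN]
    linarith
  have hfinal : (k : ℝ) / n * ((Dstar - D y) / β - R * Q / n) ≤ T := by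
    calc (k : ℝ) / n * ((Dstar - D y) / β - R * Q / n) ≤ (k : ℝ) / n * S := by
          apply mul_le_mul_of_nonneg_left hSlow (by positivity)
      _ ≤ T := hTlow
  have heq : ∀ A B : ℝ, (k : ℝ) / n * (A / β - R * B / n)
      = (k / (n * β) : ℝ) * A - (k * R / n ^ 2 : ℝ) * B := by
    intro A B
    ring
  have hfinal' := hfinal
  rw [heq (Dstar - D y) Q] at hfinal'
  exact hfinal'
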